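/- Let E and F be finite-dimensional real normed vector spaces, m ≥ 1, let ψ : E → F be m-times continuously differentiable (ContDiff ℝ m ψ), and let T ⊆ E be a set whose interior is nonempty. If for every u ∈ E and every v ∈ T the m-th derivative of ψ evaluated m times in the direction v vanishes, i.e. iteratedFDeriv ℝ m ψ u (fun _ => v) = 0, then the m-th derivative of ψ vanishes identically: iteratedFDeriv ℝ m ψ u = 0 for all u ∈ E. -/

import Mathlib

open Function Filter

set_option maxHeartbeats 1000000

namespace Stmt8Aux

universe u v

variable {E : Type u} [NormedAddCommGroup E] [NormedSpace ℝ E]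

/-- Lifting a swap of `Fin n` to a swap of `Fin (n+1)` fixing `0`. -/
lemma lift_swap {n : ℕ} (a b : Fin n) :
    Equiv.Perm.decomposeFin.symm (0, Equiv.swap a b) = Equiv.swap a.succ b.succ := by
  ext i
  refine Fin.cases ?_ (fun c => ?_) i
  · rw [Equiv.Perm.decomposeFin_symm_apply_zero,
      Equiv.swap_apply_of_ne_of_ne (Fin.succ_ne_zero a).symm (Fin.succ_ne_zero b).symm]
  · rw [Equiv.Perm.decomposeFin_symm_apply_succ, Equiv.swap_self]
    rcases eq_or_ne c a with rfl | hca
    · simp [Equiv.swap_apply_left]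
    rcases eq_or_ne c b with rfl | hcb
    · simp [Equiv.swap_apply_right]
    · rw [Equiv.swap_apply_of_ne_of_ne hca hcb, Equiv.swap_apply_of_ne_of_ne
        (fun h => hca (Fin.succ_injective _ h)) (fun h => hcb (Fin.succ_injective _ h))]
      rfl

/-- Swapping the first two arguments of an iterated derivative. -/
lemma swap01 {k : ℕ} {F : Type v} [NormedAddCommGroup F] [NormedSpace ℝ F]
    {ψ : E → F} (hψ : ContDiff ℝ (k + 2) ψ) (u : E) (v : Fin (k + 2) → E) :
    iteratedFDeriv ℝ (k + 2) ψ u (fun i => v (Equiv.swap 0 1 i)) =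
      iteratedFDeriv ℝ (k + 2) ψ u v := by
  set g := iteratedFDeriv ℝ k ψ with hgdef
  have hg1 : Differentiable ℝ g :=
    hψ.differentiable_iteratedFDeriv (by exact_mod_cast Nat.lt_of_lt_of_le (Nat.lt_succ_self k) (Nat.le_succ _))
  have hg15 : Differentiable ℝ (iteratedFDeriv ℝ (k + 1) ψ) :=
    hψ.differentiable_iteratedFDeriv (by exact_mod_cast Nat.lt_succ_self (k+1))
  have hg2 : Differentiable ℝ (fderiv ℝ g) := by
    have h1 : fderiv ℝ g =
        ⇑(continuousMultilinearCurryLeftEquiv ℝ (fun _ : Fin (k + 1) => E) F) ∘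
          iteratedFDeriv ℝ (k + 1) ψ := fderiv_iteratedFDeriv
    rw [h1]
    exact Differentiable.comp (g := ⇑(continuousMultilinearCurryLeftEquiv ℝ (fun _ : Fin (k + 1) => E) F)) (LinearIsometryEquiv.differentiable _) hg15
  have key : ∀ w : Fin (k + 2) → E, iteratedFDeriv ℝ (k + 2) ψ u w =
      fderiv ℝ (fderiv ℝ g) u (w 0) (w 1) (fun j => w j.succ.succ) := by
    intro w
    set ι := (continuousMultilinearCurryLeftEquiv ℝ (fun _ : Fin (k + 1) => E) F).symm.toContinuousLinearEquiv with hι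
    have h1 : iteratedFDeriv ℝ (k + 1) ψ =
        ⇑(continuousMultilinearCurryLeftEquiv ℝ (fun _ : Fin (k + 1) => E) F).symm ∘
          fderiv ℝ g := iteratedFDeriv_succ_eq_comp_left
    have hder : HasFDerivAt (iteratedFDeriv ℝ (k + 1) ψ)
        ((ι.toContinuousLinearMap).comp (fderiv ℝ (fderiv ℝ g) u)) u := by
      rw [h1]
      exact @HasFDerivAt.comp ℝ _ E _ _ (E →L[ℝ] E [×k]→L[ℝ] F) _ _ (E [×k+1]→L[ℝ] F) _ _ (fderiv ℝ g) (fderiv ℝ (fderiv ℝ g) u) u ⇑ι.toContinuousLinearMap ι.toContinuousLinearMap ι.toContinuousLinearMap.hasFDerivAt (hg2 u).hasFDerivAt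
    rw [iteratedFDeriv_succ_apply_left, hder.fderiv]
    simp only [ContinuousLinearMap.coe_comp', Function.comp_apply, hι,
      ContinuousLinearEquiv.coe_coe, LinearIsometryEquiv.coe_toContinuousLinearEquiv,
      continuousMultilinearCurryLeftEquiv_symm_apply]
    rw [show Fin.tail w 0 = w 1 from congrArg w (Fin.succ_zero_eq_one)]
    rfl
  have hsymm := second_derivative_symmetric (𝕜 := ℝ) (f := g) (f' := fderiv ℝ g)
      (f'' := fderiv ℝ (fderiv ℝ g) u) (fun y => (hg1 y).hasFDerivAt)
      (hg2 u).hasFDerivAt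
  rw [key, key]
  have e0 : Equiv.swap (0 : Fin (k+2)) 1 0 = 1 := Equiv.swap_apply_left _ _
  have e1 : Equiv.swap (0 : Fin (k+2)) 1 1 = 0 := Equiv.swap_apply_right _ _
  have etail : ∀ j : Fin k, Equiv.swap (0 : Fin (k+2)) 1 j.succ.succ = j.succ.succ := by
    intro j
    refine Equiv.swap_apply_of_ne_of_ne (Fin.succ_ne_zero _) ?_
    intro hj
    have := congrArg Fin.val hj
    simp [Fin.val_succ] at this
  simp only [e0, e1, etail]
  rw [hsymm (v 1) (v 0)]

/-- Full symmetry of iterated derivatives of `C^n` functions (universe-restricted form). -/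
theorem symm_aux : ∀ (n : ℕ) {F : Type (max u v)} [NormedAddCommGroup F] [NormedSpace ℝ F]
    (ψ : E → F), ContDiff ℝ n ψ → ∀ (u : E) (σ : Equiv.Perm (Fin n)) (v : Fin n → E),
    iteratedFDeriv ℝ n ψ u (fun i => v (σ i)) = iteratedFDeriv ℝ n ψ u v := by
  intro n
  induction n with
  | zero =>
    intro F _ _ ψ _ u σ v
    congr 1
    funext i
    exact i.elim0
  | succ n IH =>
    intro F iF1 iF2 ψ hψ u σ v
    have hψn : ContDiff ℝ n ψ := hψ.of_succ
    have gdiff : Differentiable ℝ (iteratedFDeriv ℝ n ψ) :=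
      hψ.differentiable_iteratedFDeriv (by exact_mod_cast Nat.lt_succ_self n)
    -- (a) invariance under permutations fixing 0 (lifted from `Fin n`)
    have lemA : ∀ (ρ : Equiv.Perm (Fin n)) (w : Fin (n + 1) → E),
        iteratedFDeriv ℝ (n + 1) ψ u (fun i => w ((Equiv.Perm.decomposeFin.symm (0, ρ)) i)) =
          iteratedFDeriv ℝ (n + 1) ψ u w := by
      intro ρ w
      have hcomp : (fun i => w ((Equiv.Perm.decomposeFin.symm (0, ρ)) i)) =
          Fin.cons (w 0) (fun j => Fin.tail w (ρ j)) := by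
        funext i
        refine Fin.cases ?_ (fun c => ?_) i
        · simp
        · simp [Fin.tail, Equiv.Perm.decomposeFin_symm_apply_succ]
      rw [hcomp]
      conv_rhs => rw [← Fin.cons_self_tail w]
      rw [iteratedFDeriv_succ_apply_left, iteratedFDeriv_succ_apply_left,
        Fin.cons_zero, Fin.tail_cons, Fin.cons_zero, Fin.tail_cons]
      set L := ContinuousMultilinearMap.domDomCongrₗᵢ ℝ E F ρ with hL
      have hgL : ⇑L ∘ (iteratedFDeriv ℝ n ψ) = iteratedFDeriv ℝ n ψ := by
        funext x
        refine ContinuousMultilinearMap.ext fun w' => ?_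
        simpa [hL, ContinuousMultilinearMap.domDomCongrₗᵢ] using IH ψ hψn x ρ w'
      have hLd : HasFDerivAt (iteratedFDeriv ℝ n ψ)
          ((L.toContinuousLinearEquiv.toContinuousLinearMap).comp
            (fderiv ℝ (iteratedFDeriv ℝ n ψ) u)) u := by
        have h' : HasFDerivAt (⇑L ∘ iteratedFDeriv ℝ n ψ)
            ((L.toContinuousLinearEquiv.toContinuousLinearMap).comp
              (fderiv ℝ (iteratedFDeriv ℝ n ψ) u)) u :=
          (L.toContinuousLinearEquiv.toContinuousLinearMap.hasFDerivAt.comp u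
            (gdiff u).hasFDerivAt)
        rwa [hgL] at h'
      calc fderiv ℝ (iteratedFDeriv ℝ n ψ) u (w 0) (fun j => Fin.tail w (ρ j))
          = (L (fderiv ℝ (iteratedFDeriv ℝ n ψ) u (w 0))) (Fin.tail w) := by
            simp [hL, ContinuousMultilinearMap.domDomCongrₗᵢ]
        _ = fderiv ℝ (iteratedFDeriv ℝ n ψ) u (w 0) (Fin.tail w) := by
            conv_rhs => rw [hLd.fderiv]
            rfl
    -- inverse closure
    have inv_cl : ∀ (τ : Equiv.Perm (Fin (n + 1))),
        (∀ w : Fin (n + 1) → E, iteratedFDeriv ℝ (n + 1) ψ u (fun i => w (τ i)) =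
          iteratedFDeriv ℝ (n + 1) ψ u w) →
        ∀ w : Fin (n + 1) → E, iteratedFDeriv ℝ (n + 1) ψ u (fun i => w (τ⁻¹ i)) =
          iteratedFDeriv ℝ (n + 1) ψ u w := by
      intro τ hτ w
      have h2 := hτ (fun i => w (τ⁻¹ i))
      simpa [Equiv.Perm.inv_def] using h2.symm
    -- all transpositions
    have Hswap : ∀ (x y : Fin (n + 1)), x ≠ y → ∀ w : Fin (n + 1) → E,
        iteratedFDeriv ℝ (n + 1) ψ u (fun i => w (Equiv.swap x y i)) =
          iteratedFDeriv ℝ (n + 1) ψ u w := by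
      clear σ v hψn gdiff IH
      revert lemA inv_cl hψ
      cases n with
      | zero =>
        intro _ _ _ x y hxy
        refine absurd ?_ hxy
        have hx := x.isLt
        have hy := y.isLt
        rw [Fin.ext_iff]
        omega
      | succ k =>
        intro hψ lemA inv_cl
        have hsw01 : ∀ w : Fin (k + 2) → E,
            iteratedFDeriv ℝ (k + 2) ψ u (fun i => w (Equiv.swap 0 1 i)) =
              iteratedFDeriv ℝ (k + 2) ψ u w := fun w => swap01 hψ u w
        have hswap0 : ∀ (y : Fin (k + 2)), y ≠ 0 → ∀ w : Fin (k + 2) → E,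
            iteratedFDeriv ℝ (k + 2) ψ u (fun i => w (Equiv.swap 0 y i)) =
              iteratedFDeriv ℝ (k + 2) ψ u w := by
          intro y hy w
          obtain ⟨b, rfl⟩ : ∃ b : Fin (k + 1), y = b.succ :=
            ⟨(y.pred hy), (Fin.succ_pred y hy).symm⟩
          set ρ : Equiv.Perm (Fin (k + 2)) := Equiv.Perm.decomposeFin.symm ((0 : Fin (k + 2)), Equiv.swap (0 : Fin (k + 1)) b) with hρ
          have h1 : ρ 0 = 0 := Equiv.Perm.decomposeFin_symm_apply_zero 0 _
          have h2 : ρ 1 = b.succ := by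
            have e1 : (1 : Fin (k + 2)) = (0 : Fin (k + 1)).succ := by
              rw [Fin.succ_zero_eq_one]
            rw [e1, hρ, Equiv.Perm.decomposeFin_symm_apply_succ]
            simp [Equiv.swap_apply_left]
          have hconj : Equiv.swap (0 : Fin (k + 2)) b.succ =
              ρ * Equiv.swap 0 1 * ρ⁻¹ := by
            rw [← h1, ← h2]
            exact Equiv.swap_apply_apply ρ 0 1
          have hρinv : ∀ w : Fin (k + 2) → E,
              iteratedFDeriv ℝ (k + 2) ψ u (fun i => w (ρ⁻¹ i)) =
                iteratedFDeriv ℝ (k + 2) ψ u w :=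
            inv_cl ρ (lemA _)
          rw [hconj]
          calc iteratedFDeriv ℝ (k + 2) ψ u
                (fun i => w ((ρ * Equiv.swap (0 : Fin (k + 2)) 1 * ρ⁻¹) i))
              = iteratedFDeriv ℝ (k + 2) ψ u
                  (fun i' => (fun i'' => w (ρ i'')) (Equiv.swap (0 : Fin (k + 2)) 1 i')) := by
                exact hρinv fun i' => (fun i'' => w (ρ i'')) (Equiv.swap (0 : Fin (k + 2)) 1 i')
            _ = iteratedFDeriv ℝ (k + 2) ψ u (fun i'' => w (ρ i'')) :=
                hsw01 fun i'' => w (ρ i'')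
            _ = iteratedFDeriv ℝ (k + 2) ψ u w := lemA _ w
        intro x y hxy w
        rcases eq_or_ne x 0 with rfl | hx
        · exact hswap0 y (Ne.symm hxy) w
        rcases eq_or_ne y 0 with rfl | hy0
        · rw [Equiv.swap_comm]
          exact hswap0 x hx w
        · obtain ⟨a, rfl⟩ : ∃ a : Fin (k + 1), x = a.succ :=
            ⟨(x.pred hx), (Fin.succ_pred x hx).symm⟩
          obtain ⟨b, rfl⟩ : ∃ b : Fin (k + 1), y = b.succ :=
            ⟨(y.pred hy0), (Fin.succ_pred y hy0).symm⟩
          rw [← lift_swap a b]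
          exact lemA _ w
    -- conclude by swap induction
    have final : ∀ (τ : Equiv.Perm (Fin (n + 1))) (w : Fin (n + 1) → E),
        iteratedFDeriv ℝ (n + 1) ψ u (fun i => w (τ i)) =
          iteratedFDeriv ℝ (n + 1) ψ u w := by
      intro τ
      refine Equiv.Perm.swap_induction_on τ (fun w => rfl) ?_
      intro f x y hxy hf w
      exact (hf fun i' => w (Equiv.swap x y i')).trans (Hswap x y hxy w)
    exact final σ v

/-- Full symmetry of iterated derivatives, arbitrary universes. -/
theorem iteratedFDeriv_perm {n : ℕ} {F : Type*} [NormedAddCommGroup F] [NormedSpace ℝ F]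
    {ψ : E → F} (hψ : ContDiff ℝ n ψ) (u : E) (σ : Equiv.Perm (Fin n)) (v : Fin n → E) :
    iteratedFDeriv ℝ n ψ u (fun i => v (σ i)) = iteratedFDeriv ℝ n ψ u v := by
  let e : ULift.{u} F ≃ₗᵢ[ℝ] F := LinearIsometryEquiv.ulift ℝ F
  let g : F →L[ℝ] ULift.{u} F := e.symm.toContinuousLinearEquiv.toContinuousLinearMap
  have hψ' : ContDiff ℝ n (⇑g ∘ ψ) := g.contDiff.comp hψ
  have hcomp : ∀ x, iteratedFDeriv ℝ n (⇑g ∘ ψ) x =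
      g.compContinuousMultilinearMap (iteratedFDeriv ℝ n ψ x) := fun x =>
    g.iteratedFDeriv_comp_left hψ.contDiffAt le_rfl
  have hmain := symm_aux n (⇑g ∘ ψ) hψ' u σ v
  rw [hcomp u] at hmain
  simp only [ContinuousLinearMap.compContinuousMultilinearMap_coe, Function.comp_apply] at hmain
  exact e.symm.injective hmain

end Stmt8Aux

/-- Lemma 12 of the paper: if `ψ` is `C^m` between
finite-dimensional real normed spaces and its `m`-th derivative, evaluated `m`
times in a fixed direction `v`, vanishes for all `u` and all `v` in a set `T`
with nonempty interior, then the `m`-th derivative vanishes identically. -/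
theorem stmt8 {E F : Type*}
    [NormedAddCommGroup E] [NormedSpace ℝ E] [FiniteDimensional ℝ E]
    [NormedAddCommGroup F] [NormedSpace ℝ F] [FiniteDimensional ℝ F]
    (m : ℕ) (hm : 1 ≤ m) (ψ : E → F) (hψ : ContDiff ℝ m ψ)
    (T : Set E) (hT : (interior T).Nonempty)
    (h : ∀ (u : E), ∀ v ∈ T, iteratedFDeriv ℝ m ψ u (fun _ => v) = 0) :
    ∀ u : E, iteratedFDeriv ℝ m ψ u = 0 := by
  intro u
  obtain ⟨v0, hv0⟩ := hT
  obtain ⟨ε, hε, hball⟩ := Metric.isOpen_iff.1 isOpen_interior v0 hv0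
  have hballT : Metric.ball v0 ε ⊆ T := fun z hz => interior_subset (hball hz)
  set P := iteratedFDeriv ℝ m ψ u with hP
  have key : ∀ j, j ≤ m → ∀ (w : Fin m → E) (v : E), v ∈ Metric.ball v0 ε →
      P (fun i => if (i : ℕ) < j then w i else v) = 0 := by
    intro j
    induction j with
    | zero =>
      intro _ w v hv
      have := h u v (hballT hv)
      simpa using this
    | succ j IHj =>
      intro hj w v hv
      have hjm : j < m := hj
      set jdx : Fin m := ⟨j, hjm⟩ with hjdx
      set x : Fin m → E := fun i => if (i : ℕ) < j then w i else v with hx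
      set y : Fin m → E := fun i => if (i : ℕ) < j then 0 else w jdx with hy
      set z : Fin m → E := Function.update x jdx (w jdx) with hz
      set δ : ℝ := (ε - dist v v0) / (‖w jdx‖ + 1) with hδ
      have hden : (0:ℝ) < ‖w jdx‖ + 1 := by positivity
      have hvv0 : dist v v0 < ε := by simpa [Metric.mem_ball] using hv
      have hδpos : 0 < δ := div_pos (by linarith) hden
      have hcurve : ∀ t : ℝ, |t| < δ → P (x + t • y) = 0 := by
        intro t ht
        have hxy : (x + t • y) = fun i : Fin m => if (i : ℕ) < j then w i else v + t • w jdx := by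
          funext i
          by_cases hij : (i : ℕ) < j <;> simp [hx, hy, hij]
        rw [hxy]
        refine IHj hjm.le w (v + t • w jdx) ?_
        have hd1 : dist (v + t • w jdx) v0 ≤ ‖t • w jdx‖ + dist v v0 := by
          calc dist (v + t • w jdx) v0 ≤ dist (v + t • w jdx) v + dist v v0 :=
                dist_triangle _ _ _
            _ = ‖t • w jdx‖ + dist v v0 := by
                rw [dist_eq_norm, add_sub_cancel_left]
        have hd2 : ‖t • w jdx‖ < ε - dist v v0 := by
          rw [norm_smul, Real.norm_eq_abs]
          calc |t| * ‖w jdx‖ ≤ |t| * (‖w jdx‖ + 1) := by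
                have := abs_nonneg t; nlinarith
            _ < δ * (‖w jdx‖ + 1) := mul_lt_mul_of_pos_right ht hden
            _ = ε - dist v v0 := div_mul_cancel₀ _ (ne_of_gt hden)
        rw [Metric.mem_ball]
        linarith
      have hgamma : HasDerivAt (fun t : ℝ => x + t • y) y 0 := by
        have h1 : HasDerivAt (fun t : ℝ => t • y) ((1:ℝ) • y) 0 :=
          (hasDerivAt_id (0:ℝ)).smul_const y
        simpa using h1.const_add x
      have hx0 : (fun t : ℝ => x + t • y) 0 = x := by simp
      have hD : HasDerivAt (fun t : ℝ => P (x + t • y)) (P.linearDeriv x y) 0 := by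
        have h2 : HasFDerivAt P (P.linearDeriv x) ((fun t : ℝ => x + t • y) 0) := by
          rw [hx0]; exact P.hasFDerivAt x
        exact h2.comp_hasDerivAt 0 hgamma
      have hcoef : P.linearDeriv x y = 0 := by
        have hev : (fun t : ℝ => P (x + t • y)) =ᶠ[nhds (0:ℝ)] (fun _ => 0) := by
          filter_upwards [Metric.ball_mem_nhds (0:ℝ) hδpos] with t ht
          exact hcurve t (by simpa [Real.dist_eq] using ht)
        have hD0 : HasDerivAt (fun _ : ℝ => (0:F)) (P.linearDeriv x y) 0 :=
          hD.congr_of_eventuallyEq hev.symm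
        have hder := hD0.deriv
        simpa using hder.symm
      have hexp : P.linearDeriv x y = ∑ i : Fin m, P (Function.update x i (y i)) :=
        P.linearDeriv_apply x y
      have hterm : ∀ i : Fin m, P (Function.update x i (y i)) =
          if j ≤ (i : ℕ) then P z else 0 := by
        intro i
        by_cases hij : (i : ℕ) < j
        · rw [if_neg (by omega)]
          have hyi : y i = 0 := by simp [hy, hij]
          rw [hyi]
          exact P.toMultilinearMap.map_update_zero x i
        · rw [if_pos (by omega)]
          have hyi : y i = w jdx := by simp [hy, hij]
          rw [hyi]
          rcases eq_or_ne i jdx with rfl | hne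
          · rfl
          · have hswap : Function.update x i (w jdx) = fun i' => z (Equiv.swap jdx i i') := by
              funext i'
              rcases eq_or_ne i' i with rfl | h1
              · rw [Equiv.swap_apply_right, Function.update_self, hz, Function.update_self]
              rcases eq_or_ne i' jdx with rfl | h2
              · rw [Equiv.swap_apply_left, Function.update_of_ne (Ne.symm hne), hz,
                  Function.update_of_ne hne]
                have hxi : x i = v := by simp [hx, hij]
                have hxj : x jdx = v := by
                  have : ¬ ((jdx : ℕ) < j) := by simp [hjdx]
                  simp [hx, this]
                rw [hxi, hxj]
              · rw [Equiv.swap_apply_of_ne_of_ne h2 h1, Function.update_of_ne h1, hz,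
                  Function.update_of_ne h2]
            rw [hswap]
            exact Stmt8Aux.iteratedFDeriv_perm hψ u (Equiv.swap jdx i) z
      have hsum : ∑ i : Fin m, P (Function.update x i (y i)) =
          ((Finset.univ.filter fun i : Fin m => j ≤ (i : ℕ)).card) • P z := by
        rw [Finset.sum_congr rfl (fun i _ => hterm i), Finset.sum_ite,
          Finset.sum_const, Finset.sum_const_zero, add_zero]
      have hmem : jdx ∈ (Finset.univ.filter fun i : Fin m => j ≤ (i : ℕ)) :=
        Finset.mem_filter.mpr ⟨Finset.mem_univ _, le_refl j⟩
      have hcard : 0 < (Finset.univ.filter fun i : Fin m => j ≤ (i : ℕ)).card :=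
        Finset.card_pos.mpr ⟨jdx, hmem⟩
      have hPz : P z = 0 := by
        have h0 : (((Finset.univ.filter fun i : Fin m => j ≤ (i : ℕ)).card : ℝ)) • P z = 0 := by
          rw [Nat.cast_smul_eq_nsmul, ← hsum, ← hexp, hcoef]
        rcases smul_eq_zero.mp h0 with h1 | h1
        · exact absurd h1 (Nat.cast_pos.mpr hcard).ne'
        · exact h1
      have hzgoal : z = fun i : Fin m => if (i : ℕ) < j + 1 then w i else v := by
        funext i
        rcases eq_or_ne i jdx with rfl | hne
        · rw [hz, Function.update_self]
          have : (jdx : ℕ) < j + 1 := by simp [hjdx]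
          rw [if_pos this]
        · rw [hz, Function.update_of_ne hne, hx]
          show (if (i : ℕ) < j then w i else v) = if (i : ℕ) < j + 1 then w i else v
          have hvne : (i : ℕ) ≠ j := fun hh => hne (Fin.ext (by simp [hjdx, hh]))
          by_cases hij : (i : ℕ) < j
          · rw [if_pos hij, if_pos (by omega)]
          · rw [if_neg hij, if_neg (by omega)]
      exact hzgoal ▸ hPz
  refine ContinuousMultilinearMap.ext fun w => ?_
  have hfin := key m le_rfl w v0 (Metric.mem_ball_self hε)
  have hww : (fun i : Fin m => if (i : ℕ) < m then w i else v0) = w :=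
    funext fun i => if_pos i.isLt
  rw [hww] at hfin
  simpa using hfin
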